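/- Fix a probability vector p̂ ∈ Δ(V) with p̂_1 ≥ … ≥ p̂_d > 0 and ε with p̂_d ≤ ε < p̂_1. Let î = max{i : p̂_i > ε} and define ŵ_i = ε / log(p̂_i/(p̂_i − ε)) for 1 ≤ i ≤ î. Then for every probability vector q ∈ Δ(V): if q_i = 0 for all i > î, the infimum of Σ_i q_i log p_i over p ∈ N(p̂) equals Σ_i q_i log p̂_i − ε · max_{1 ≤ i ≤ î} (q_i / ŵ_i); otherwise this infimum equals −∞ (in the extended reals, with the convention log 0 = −∞). -/

import Mathlib

open Finset

noncomputable def elog (x : ℝ) : EReal := if x ≤ 0 then ⊥ else ((Real.log x : ℝ) : EReal)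

def simplex (d : ℕ) : Set (Fin d → ℝ) := {p | (∀ i, 0 ≤ p i) ∧ ∑ i, p i = 1}

noncomputable def dTV {d : ℕ} (p q : Fin d → ℝ) : ℝ := (∑ i, |p i - q i|) / 2

def nbhd {d : ℕ} (phat : Fin d → ℝ) (ε : ℝ) : Set (Fin d → ℝ) :=
  {p | p ∈ simplex d ∧ dTV p phat ≤ ε}

noncomputable def obj {d : ℕ} (q p : Fin d → ℝ) : EReal :=
  ∑ i, ((q i : ℝ) : EReal) * elog (p i)

/-- `ŵ_i = ε / log(p̂_i/(p̂_i − ε))`. -/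
noncomputable def what {d : ℕ} (phat : Fin d → ℝ) (ε : ℝ) (i : Fin d) : ℝ :=
  ε / Real.log (phat i / (phat i - ε))

lemma coe_sum' {ι : Type*} (s : Finset ι) (f : ι → ℝ) :
    ((∑ i ∈ s, f i : ℝ) : EReal) = ∑ i ∈ s, ((f i : ℝ) : EReal) := by
  classical
  induction s using Finset.induction with
  | empty => simp
  | insert _ _ h ih => rw [Finset.sum_insert h, Finset.sum_insert h, EReal.coe_add, ih]

lemma ereal_sum_eq_bot {ι : Type*} (s : Finset ι) (f : ι → EReal) (i : ι)
    (hi : i ∈ s) (h : f i = ⊥) : ∑ j ∈ s, f j = ⊥ := by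
  classical
  rw [← Finset.add_sum_erase _ f hi, h]
  exact EReal.bot_add _

/-- closed form for the inner (adversarial) minimization of the
one-step Decoding Game under TV distance. -/
theorem stmt0 {d : ℕ} (hd : 0 < d) (phat : Fin d → ℝ) (ε : ℝ)
    (hmem : phat ∈ simplex d)
    (hpos : ∀ i, 0 < phat i)
    (hsort : ∀ i j : Fin d, i ≤ j → phat j ≤ phat i)
    (heps_lo : phat ⟨d - 1, by omega⟩ ≤ ε)
    (heps_hi : ε < phat ⟨0, hd⟩)
    (ihat : Fin d)
    (hihat1 : ε < phat ihat)
    (hihat2 : ∀ i : Fin d, ε < phat i → i ≤ ihat)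
    (q : Fin d → ℝ) (hq : q ∈ simplex d) :
    ((∀ i : Fin d, ihat < i → q i = 0) →
        ⨅ p ∈ nbhd phat ε, obj q p
          = (((∑ i, q i * Real.log (phat i))
              - ε * sSup {x : ℝ | ∃ i : Fin d, i ≤ ihat ∧ x = q i / what phat ε i} : ℝ) : EReal))
    ∧ (¬ (∀ i : Fin d, ihat < i → q i = 0) →
        ⨅ p ∈ nbhd phat ε, obj q p = (⊥ : EReal)) := by
  classical
  obtain ⟨hqnn, hqsum⟩ := hq
  obtain ⟨hpnn, hpsum⟩ := hmem
  have hεpos : 0 < ε := lt_of_lt_of_le (hpos _) heps_lo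
  set lastI : Fin d := ⟨d - 1, by omega⟩ with hlastI
  have hlt : ∀ i : Fin d, i ≤ ihat → ε < phat i :=
    fun i hi => lt_of_lt_of_le hihat1 (hsort i ihat hi)
  have hihat_lt_last : ihat < lastI := by
    rcases lt_or_ge ihat lastI with h | h
    · exact h
    · exact absurd (hlt lastI h) (not_lt.mpr heps_lo)
  -- the maximizer
  set G : Fin d → ℝ := fun i => q i * Real.log (phat i / (phat i - ε)) with hG
  set T : Finset (Fin d) := Finset.univ.filter (fun i => i ≤ ihat) with hT
  have hTne : T.Nonempty := ⟨ihat, by simp [hT]⟩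
  obtain ⟨i₀, hi₀T, hmax⟩ := T.exists_max_image G hTne
  have hi₀ : i₀ ≤ ihat := by simpa [hT] using hi₀T
  have hGmax : ∀ i : Fin d, i ≤ ihat → G i ≤ G i₀ := fun i hi => hmax i (by simp [hT, hi])
  have hdivw : ∀ i : Fin d, q i / what phat ε i = G i / ε := by
    intro i
    rw [what, div_div_eq_mul_div, hG]
  have hSup : sSup {x : ℝ | ∃ i : Fin d, i ≤ ihat ∧ x = q i / what phat ε i} = G i₀ / ε := by
    apply IsGreatest.csSup_eq
    constructor
    · exact ⟨i₀, hi₀, (hdivw i₀).symm⟩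
    · rintro x ⟨i, hi, rfl⟩
      rw [hdivw]
      exact div_le_div_of_nonneg_right (hGmax i hi) hεpos.le
  have hεS : ε * sSup {x : ℝ | ∃ i : Fin d, i ≤ ihat ∧ x = q i / what phat ε i} = G i₀ := by
    rw [hSup]; field_simp
  have hGnn : 0 ≤ G i₀ := by
    refine le_trans ?_ (hGmax ihat le_rfl)
    exact mul_nonneg (hqnn ihat) (Real.log_nonneg (by
      rw [le_div_iff₀ (by linarith)]
      linarith))
  constructor
  · -- main case
    intro hsupp
    have hqule : ∀ i : Fin d, q i ≠ 0 → i ≤ ihat := by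
      intro i hi
      by_contra h
      exact hi (hsupp i (not_le.mp h))
    have hGle : ∀ k : Fin d, G k ≤ G i₀ := by
      intro k
      by_cases hk : k ≤ ihat
      · exact hGmax k hk
      · have : q k = 0 := hsupp k (not_le.mp hk)
        simp only [hG, this, zero_mul]; exact hGnn
    have hqlast : q lastI = 0 := hsupp lastI hihat_lt_last
    have hne : i₀ ≠ lastI := ne_of_lt (lt_of_le_of_lt hi₀ hihat_lt_last)
    have hplt : ε < phat i₀ := hlt i₀ hi₀
    set pstar : Fin d → ℝ :=
      fun k => if k = i₀ then phat i₀ - ε else if k = lastI then phat lastI + ε else phat k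
      with hpstar
    have hpstar_eq : ∀ k, pstar k
        = phat k + ((if k = i₀ then -ε else 0) + (if k = lastI then ε else 0)) := by
      intro k
      by_cases h1 : k = i₀
      · subst h1; rw [hpstar]; simp [hne]; ring
      · by_cases h2 : k = lastI
        · subst h2; rw [hpstar]; simp [h1]
        · rw [hpstar]; simp [h1, h2]
    have hpstar_pos : ∀ k, 0 < pstar k := by
      intro k
      by_cases h1 : k = i₀
      · subst h1; rw [hpstar]; simp; linarith
      · by_cases h2 : k = lastI
        · subst h2; rw [hpstar]; simp [Ne.symm hne]; linarith [hpos lastI]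
        · rw [hpstar]; simp [h1, h2]; exact hpos k
    have hpstar_mem : pstar ∈ nbhd phat ε := by
      refine ⟨⟨fun k => (hpstar_pos k).le, ?_⟩, ?_⟩
      · rw [Finset.sum_congr rfl (fun k _ => hpstar_eq k)]
        rw [Finset.sum_add_distrib, Finset.sum_add_distrib, hpsum]
        rw [Finset.sum_ite_eq' Finset.univ i₀ (fun _ => -ε),
            Finset.sum_ite_eq' Finset.univ lastI (fun _ => ε)]
        simp
      · have : ∀ k, |pstar k - phat k|
            = (if k = i₀ then ε else 0) + (if k = lastI then ε else 0) := by
          intro k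
          rw [hpstar_eq k]
          by_cases h1 : k = i₀
          · simp [h1, hne, abs_of_nonneg hεpos.le]
          · by_cases h2 : k = lastI
            · subst h2; simp [h1, Ne.symm hne, abs_of_nonneg hεpos.le]
            · simp [h1, h2]
        rw [dTV, Finset.sum_congr rfl (fun k _ => this k)]
        rw [Finset.sum_add_distrib,
            Finset.sum_ite_eq' Finset.univ i₀ (fun _ => ε),
            Finset.sum_ite_eq' Finset.univ lastI (fun _ => ε)]
        simp
    have hobj_star : obj q pstar
        = (((∑ i, q i * Real.log (phat i)) - G i₀ : ℝ) : EReal) := by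
      have h1 : obj q pstar = ((∑ k, q k * Real.log (pstar k) : ℝ) : EReal) := by
        rw [obj, coe_sum']
        refine Finset.sum_congr rfl (fun k _ => ?_)
        rw [elog, if_neg (not_le.mpr (hpstar_pos k)), EReal.coe_mul]
      rw [h1]
      congr 1
      have h2 : ∀ k, q k * Real.log (pstar k) = q k * Real.log (phat k)
          + (if k = i₀ then q i₀ * (Real.log (phat i₀ - ε) - Real.log (phat i₀)) else 0) := by
        intro k
        by_cases hk1 : k = i₀
        · subst hk1; rw [hpstar]; simp; ring
        · by_cases hk2 : k = lastI
          · subst hk2; rw [hpstar]; simp [hk1, hqlast]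
          · rw [hpstar]; simp [hk1, hk2]
      rw [Finset.sum_congr rfl (fun k _ => h2 k), Finset.sum_add_distrib,
          Finset.sum_ite_eq' Finset.univ i₀
            (fun _ => q i₀ * (Real.log (phat i₀ - ε) - Real.log (phat i₀)))]
      have hGi₀ : G i₀ = q i₀ * (Real.log (phat i₀) - Real.log (phat i₀ - ε)) := by
        simp only [hG]
        rw [Real.log_div (ne_of_gt (hpos i₀)) (by linarith)]
      simp only [Finset.mem_univ, if_true]
      rw [hGi₀]; ring
    have hub : ⨅ p ∈ nbhd phat ε, obj q p
        ≤ (((∑ i, q i * Real.log (phat i)) - G i₀ : ℝ) : EReal) := by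
      rw [← hobj_star]
      exact iInf₂_le pstar hpstar_mem
    have hlb : (((∑ i, q i * Real.log (phat i)) - G i₀ : ℝ) : EReal)
        ≤ ⨅ p ∈ nbhd phat ε, obj q p := by
      refine le_iInf₂ (fun p hp => ?_)
      obtain ⟨⟨hpn, hps⟩, hpd⟩ := hp
      set δ : Fin d → ℝ := fun k => max (phat k - p k) 0 with hδ
      have hδnn : ∀ k, 0 ≤ δ k := fun k => le_max_right _ _
      have hδk : ∀ k, phat k - p k ≤ δ k := fun k => le_max_left _ _
      have hδsum : ∑ k, δ k ≤ ε := by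
        have habs : ∀ k, |p k - phat k| = 2 * δ k - (phat k - p k) := by
          intro k
          rcases le_total (p k) (phat k) with h | h
          · rw [abs_of_nonpos (by linarith), hδ]
            simp [max_eq_left (by linarith : (0:ℝ) ≤ phat k - p k)]
            try ring
          · rw [abs_of_nonneg (by linarith), hδ]
            simp [max_eq_right (by linarith : phat k - p k ≤ 0)]
            try ring
        have h2 : ∑ k, |p k - phat k| = 2 * ∑ k, δ k := by
          rw [Finset.sum_congr rfl (fun k _ => habs k)]
          rw [Finset.sum_sub_distrib, Finset.sum_sub_distrib, ← Finset.mul_sum, hpsum, hps]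
          ring
        rw [dTV, h2] at hpd
        linarith
      have hδle : ∀ k, δ k ≤ ε := by
        intro k
        calc δ k ≤ ∑ j, δ j :=
              Finset.single_le_sum (fun j _ => hδnn j) (Finset.mem_univ k)
          _ ≤ ε := hδsum
      have key : ∀ k, ((q k * Real.log (phat k) - (δ k / ε) * G k : ℝ) : EReal)
          ≤ ((q k : ℝ) : EReal) * elog (p k) := by
        intro k
        rcases (hqnn k).eq_or_lt with h | h
        · simp only [hG, ← h]
          norm_num
        · have hk : k ≤ ihat := hqule k h.ne'
          have h1 : ε < phat k := hlt k hk
          have hpk : phat k - δ k ≤ p k := by linarith [hδk k]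
          have hppos : 0 < p k := lt_of_lt_of_le (by linarith [hδle k]) hpk
          rw [elog, if_neg (not_le.mpr hppos), ← EReal.coe_mul]
          apply EReal.coe_le_coe_iff.mpr
          set t : ℝ := δ k / ε with ht
          have htnn : 0 ≤ t := div_nonneg (hδnn k) hεpos.le
          have hts : t * ε = δ k := div_mul_cancel₀ _ hεpos.ne'
          have hcc := (strictConcaveOn_log_Ioi.concaveOn).2
            (Set.mem_Ioi.mpr (hpos k)) (Set.mem_Ioi.mpr (by linarith : (0:ℝ) < phat k - ε))
            (by linarith [div_le_one_of_le₀ (hδle k) hεpos.le] : 0 ≤ 1 - t) htnn (by ring)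
          simp only [smul_eq_mul] at hcc
          have heq : (1 - t) * phat k + t * (phat k - ε) = phat k - δ k := by
            have : (1 - t) * phat k + t * (phat k - ε) = phat k - t * ε := by ring
            rw [this, hts]
          rw [heq] at hcc
          have hlog1 : Real.log (phat k - δ k) ≤ Real.log (p k) :=
            Real.log_le_log (by linarith [hδle k]) hpk
          have hLk : Real.log (phat k / (phat k - ε))
              = Real.log (phat k) - Real.log (phat k - ε) :=
            Real.log_div (ne_of_gt (hpos k)) (by linarith)
          have hmain : Real.log (phat k) - t * (Real.log (phat k) - Real.log (phat k - ε))
              ≤ Real.log (p k) := by linarith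
          have := mul_le_mul_of_nonneg_left hmain (hqnn k)
          simp only [hG, hLk]
          nlinarith [this]
      calc (((∑ i, q i * Real.log (phat i)) - G i₀ : ℝ) : EReal)
          ≤ ((∑ k, (q k * Real.log (phat k) - (δ k / ε) * G k) : ℝ) : EReal) := by
            apply EReal.coe_le_coe_iff.mpr
            rw [Finset.sum_sub_distrib]
            have hsum1 : ∑ k, (δ k / ε) * G k ≤ G i₀ := by
              calc ∑ k, (δ k / ε) * G k ≤ ∑ k, (δ k / ε) * G i₀ :=
                    Finset.sum_le_sum (fun k _ =>
                      mul_le_mul_of_nonneg_left (hGle k)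
                        (div_nonneg (hδnn k) hεpos.le))
                _ = (∑ k, δ k) / ε * G i₀ := by
                    rw [← Finset.sum_mul, ← Finset.sum_div]
                _ ≤ 1 * G i₀ := by
                    apply mul_le_mul_of_nonneg_right _ hGnn
                    rw [div_le_one hεpos]
                    exact hδsum
                _ = G i₀ := one_mul _
            linarith
        _ = ∑ k, ((q k * Real.log (phat k) - (δ k / ε) * G k : ℝ) : EReal) := coe_sum' _ _
        _ ≤ ∑ k, ((q k : ℝ) : EReal) * elog (p k) := Finset.sum_le_sum (fun k _ => key k)
        _ = obj q p := rfl
    rw [hεS]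
    exact le_antisymm hub hlb
  · -- degenerate case
    intro hns
    push_neg at hns
    obtain ⟨j, hj1, hj2⟩ := hns
    have hqj : 0 < q j := lt_of_le_of_ne (hqnn j) (Ne.symm hj2)
    have hpj : phat j ≤ ε := by
      by_contra h
      exact absurd (hihat2 j (not_le.mp h)) (not_le.mpr hj1)
    set z : Fin d := ⟨0, hd⟩ with hz
    have hjz : j ≠ z := by
      have : z ≤ ihat := by
        simp only [hz, Fin.le_def]
        exact Nat.zero_le _
      exact ne_of_gt (lt_of_le_of_lt this hj1)
    set pbad : Fin d → ℝ :=
      fun k => if k = j then 0 else if k = z then phat z + phat j else phat k with hpbad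
    have hpbad_eq : ∀ k, pbad k
        = phat k + ((if k = j then -phat j else 0) + (if k = z then phat j else 0)) := by
      intro k
      by_cases h1 : k = j
      · subst h1; rw [hpbad]; simp [hjz]
      · by_cases h2 : k = z
        · subst h2; rw [hpbad]; simp [h1]
          try ring
        · rw [hpbad]; simp [h1, h2]
    have hpbad_mem : pbad ∈ nbhd phat ε := by
      refine ⟨⟨?_, ?_⟩, ?_⟩
      · intro k
        rw [hpbad]
        by_cases h1 : k = j
        · simp [h1]
        · by_cases h2 : k = z
          · subst h2; simp [Ne.symm hjz]; linarith [hpos ⟨0, hd⟩, hpos j]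
          · simp [h1, h2]; exact (hpos k).le
      · rw [Finset.sum_congr rfl (fun k _ => hpbad_eq k)]
        rw [Finset.sum_add_distrib, Finset.sum_add_distrib, hpsum]
        rw [Finset.sum_ite_eq' Finset.univ j (fun _ => -phat j),
            Finset.sum_ite_eq' Finset.univ z (fun _ => phat j)]
        simp
      · have habs : ∀ k, |pbad k - phat k|
            = (if k = j then phat j else 0) + (if k = z then phat j else 0) := by
          intro k
          rw [hpbad_eq k]
          by_cases h1 : k = j
          · simp [h1, hjz, abs_of_nonneg (hpos j).le]
          · by_cases h2 : k = z
            · subst h2; simp [h1, Ne.symm hjz, abs_of_nonneg (hpos j).le]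
            · simp [h1, h2]
        rw [dTV, Finset.sum_congr rfl (fun k _ => habs k)]
        rw [Finset.sum_add_distrib,
            Finset.sum_ite_eq' Finset.univ j (fun _ => phat j),
            Finset.sum_ite_eq' Finset.univ z (fun _ => phat j)]
        simp
        linarith
    have hobj_bot : obj q pbad = ⊥ := by
      apply ereal_sum_eq_bot _ _ j (Finset.mem_univ j)
      have : pbad j = 0 := by rw [hpbad]; simp
      rw [this, elog, if_pos le_rfl]
      exact EReal.coe_mul_bot_of_pos hqj
    have : ⨅ p ∈ nbhd phat ε, obj q p ≤ ⊥ := by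
      rw [← hobj_bot]
      exact iInf₂_le pbad hpbad_mem
    exact le_bot_iff.mp this
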